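/- Let $X$ be a medial quandle and $u$ an idempotent of the quandle ring $\mathbf{k}[X]$. Then the right multiplication map $\hat{S}_u : \mathbf{k}[X] \to \mathbf{k}[X]$, $\hat{S}_u(w) = wu$, is a ring endomorphism of $\mathbf{k}[X]$. -/

import Mathlib

/-- A quandle with the paper's (right-multiplication) convention:
`x * y = S_y(x)`, each `S_y` is an automorphism of the quandle fixing `y`. -/
class Quandle' (Q : Type*) extends Mul Q where
  invMul : Q → Q → Q
  rightDist : ∀ x y z : Q, (x * y) * z = (x * z) * (y * z)
  invMul_mul : ∀ x y : Q, invMul (x * y) y = x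
  mul_invMul : ∀ x y : Q, (invMul x y) * y = x
  mul_self : ∀ x : Q, x * x = x

/-- For a medial quandle, right multiplication by an idempotent of the quandle ring is
multiplicative (hence a ring endomorphism of `k[X]`). -/
theorem stmt9 {Q : Type*} [Quandle' Q]
    (medial : ∀ a b c d : Q, (a * b) * (c * d) = (a * c) * (b * d))
    (k : Type*) [CommRing k] [IsDomain k]
    (u : MonoidAlgebra k Q) (hu : u * u = u) (hu0 : u ≠ 0) :
    ∀ v w : MonoidAlgebra k Q, (v * w) * u = (v * u) * (w * u) := by
  have key : ∀ v w a b : MonoidAlgebra k Q, (v * a) * (w * b) = (v * w) * (a * b) := by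
    intro v w a b
    induction v using MonoidAlgebra.induction_linear with
    | zero => simp [zero_mul]
    | add p q hp hq => simp only [add_mul, hp, hq]
    | single x r =>
      induction w using MonoidAlgebra.induction_linear with
      | zero => simp [zero_mul, mul_zero]
      | add p q hp hq => simp only [add_mul, mul_add, hp, hq]
      | single y s =>
        induction a using MonoidAlgebra.induction_linear with
        | zero => simp [zero_mul, mul_zero]
        | add p q hp hq => simp only [add_mul, mul_add, hp, hq]
        | single c t =>
          induction b using MonoidAlgebra.induction_linear with
          | zero => simp [zero_mul, mul_zero]
          | add p q hp hq => simp only [add_mul, mul_add, hp, hq]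
          | single d e =>
            show (MonoidAlgebra.single x r * MonoidAlgebra.single c t) *
                (MonoidAlgebra.single y s * MonoidAlgebra.single d e) = _
            simp only [MonoidAlgebra.single_mul_single]
            rw [medial x c y d]
            ring_nf
  intro v w
  conv_lhs => rw [← hu]
  rw [← key]
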